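/- Theorem 1 (differential privacy of DP-KCCM): let ε₁, …, ε_T > 0 with ε = ε₁ + ⋯ + ε_T, let r > 0 and Δ = d·r + 1. Consider the adaptive mechanism that, on a finite dataset D of points in [−r, r]^d, performs T iterations, where in iteration t a measurable assignment function g_t : ℝ^d → {1, …, K} is chosen as a measurable function of the outputs of iterations 1, …, t−1 only, and the iteration outputs, for each cluster index j, the noisy per-cluster sum ∑_{x∈D, g_t(x)=j} x + i.i.d. Lap(Δ/ε_t) noise per coordinate and the noisy per-cluster count |{x∈D : g_t(x)=j}| + Lap(Δ/ε_t) noise; finally a deterministic measurable post-processing map (the cluster-merging step, which uses only the noisy centroids and noisy counts) is applied to the collected outputs. This composed mechanism satisfies ε-differential privacy. -/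

import Mathlib

open MeasureTheory Real

/-- Two finite datasets of points in `ℝ^d` are neighboring if one is obtained from the
other by adding or removing a single element. -/
def Neighbor {d : ℕ} (D D' : Finset (Fin d → ℝ)) : Prop :=
  (∃ x ∉ D, D' = insert x D) ∨ (∃ x ∉ D', D = insert x D')

/-- The Laplace distribution `Lap(b)`: the measure on `ℝ` with density
`(1/(2b))·exp(−|x|/b)` with respect to Lebesgue measure. -/
noncomputable def laplace (b : ℝ) : Measure ℝ :=
  volume.withDensity fun x => ENNReal.ofReal (1 / (2 * b) * Real.exp (-|x| / b))

/-- The (noiseless) per-iteration query of DP-KCCM: for each cluster index `j` it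
returns the `d` coordinates of the cluster sum `∑_{x ∈ D, g x = j} x` together with
the cluster count `|{x ∈ D : g x = j}|`. -/
noncomputable def iterQuery {d K : ℕ} (g : (Fin d → ℝ) → Fin K)
    (D : Finset (Fin d → ℝ)) : Fin K × Fin (d + 1) → ℝ :=
  fun p =>
    if h : (p.2 : ℕ) < d then ∑ x ∈ D.filter fun y => g y = p.1, x ⟨p.2, h⟩
    else ((D.filter fun y => g y = p.1).card : ℝ)

/-- One iteration of DP-KCCM: output, for each cluster `j`, the noisy sum and noisy
count, all noise variables across coordinates and clusters i.i.d. `Lap(b)`. -/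
noncomputable def noisyIteration {d K : ℕ} (g : (Fin d → ℝ) → Fin K) (b : ℝ)
    (D : Finset (Fin d → ℝ)) : Measure (Fin K × Fin (d + 1) → ℝ) :=
  (Measure.pi fun _ : Fin K × Fin (d + 1) => laplace b).map fun y => iterQuery g D + y

/-- The adaptive composition of `T` DP-KCCM iterations on dataset `D`: in iteration
`t`, the assignment function `g t h` may depend on the history `h` of outputs of
iterations `1, …, t−1`, and the iteration adds i.i.d. `Lap(b t)` noise to the
per-cluster sums and counts; the mechanism collects all `T` iteration outputs. -/
noncomputable def adaptiveMech (d K : ℕ)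
    (g : (t : ℕ) → (Fin t → (Fin K × Fin (d + 1) → ℝ)) → (Fin d → ℝ) → Fin K)
    (b : ℕ → ℝ) (D : Finset (Fin d → ℝ)) :
    (T : ℕ) → Measure (Fin T → (Fin K × Fin (d + 1) → ℝ))
  | 0 => Measure.dirac fun i => i.elim0
  | T + 1 => (adaptiveMech d K g b D T).bind fun h =>
      (noisyIteration (g T h) (b T) D).map (Fin.snoc h)

noncomputable def lapDens (b x : ℝ) : ℝ := 1 / (2 * b) * Real.exp (-|x| / b)

lemma lapDens_nonneg {b : ℝ} (hb : 0 < b) (x : ℝ) : 0 ≤ lapDens b x := by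
  unfold lapDens; positivity

lemma measurable_lapDens (b : ℝ) : Measurable (lapDens b) := by
  unfold lapDens
  exact (measurable_const.mul ((measurable_neg.comp (_root_.continuous_abs.measurable)).div_const b).exp)

lemma lapDens_le {b : ℝ} (hb : 0 < b) (u v : ℝ) :
    lapDens b u ≤ Real.exp (|u - v| / b) * lapDens b v := by
  unfold lapDens
  rw [mul_comm (Real.exp _), mul_assoc, ← Real.exp_add]
  have h1 : 0 ≤ 1 / (2 * b) := by positivity
  refine mul_le_mul_of_nonneg_left (Real.exp_le_exp.mpr ?_) h1
  rw [← add_div, div_le_div_iff_of_pos_right hb]  -- maybe wrong name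
  have := abs_sub_abs_le_abs_sub u v
  linarith [abs_sub_abs_le_abs_sub v u, (abs_sub_comm v u)]

instance lap_sf (b : ℝ) : SigmaFinite (laplace b) := by
  unfold laplace; infer_instance

theorem my_withDensity_map_add {G : Type*} [MeasurableSpace G] [AddGroup G] [MeasurableAdd G]
    (μ : Measure G) [μ.IsAddLeftInvariant] (f : G → ENNReal) (hf : Measurable f) (c : G) :
    (μ.withDensity f).map (fun x => c + x) = μ.withDensity (fun x => f (-c + x)) := by
  ext s hs
  rw [Measure.map_apply (measurable_const_add c) hs,
    withDensity_apply _ ((measurable_const_add c) hs), withDensity_apply _ hs,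
    ← lintegral_indicator ((measurable_const_add c) hs), ← lintegral_indicator hs,
    ← lintegral_add_left_eq_self (fun x => s.indicator (fun y => f (-c + y)) x) c]
  congr 1
  funext x
  by_cases hx : c + x ∈ s
  · rw [Set.indicator_of_mem hx, Set.indicator_of_mem (by simpa using hx), neg_add_cancel_left]
  · rw [Set.indicator_of_notMem hx, Set.indicator_of_notMem (by simpa using hx)]

theorem my_lintegral_pi_fin {n : ℕ} (μ : Fin n → Measure ℝ) [∀ i, SigmaFinite (μ i)]
    (f : Fin n → ℝ → ENNReal) (hf : ∀ i, Measurable (f i)) :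
    ∫⁻ x, ∏ i, f i (x i) ∂Measure.pi μ = ∏ i, ∫⁻ y, f i y ∂μ i := by
  induction n with
  | zero => simp [Measure.pi_of_empty]
  | succ n ih =>
      have h := (measurePreserving_piFinSuccAbove μ 0).symm
      rw [← h.lintegral_comp (f := fun x => ∏ i, f i (x i))
        (Finset.measurable_prod _ fun i _ => (hf i).comp (measurable_pi_apply i))]
      simp only [MeasurableEquiv.piFinSuccAbove_symm_apply, Fin.insertNthEquiv,
        Fin.prod_univ_succ, Fin.insertNth_zero, Equiv.coe_fn_mk,
        Fin.zero_succAbove, Function.comp_def, Fin.cons_zero, Fin.cons_succ, cast_eq]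
      rw [lintegral_prod_mul (f := f 0) (g := fun y : Fin n → ℝ => ∏ x : Fin n, f x.succ (y x)) (hf 0).aemeasurable
        (Finset.measurable_prod _ fun i _ => (hf i.succ).comp (measurable_pi_apply i)).aemeasurable]
      congr 1
      have := ih (fun i => μ i.succ) (fun i => f i.succ) (fun i => hf i.succ)
      simpa [Fin.zero_succAbove] using this

theorem my_lintegral_pi {ι : Type*} [Fintype ι] (μ : ι → Measure ℝ) [∀ i, SigmaFinite (μ i)]
    (f : ι → ℝ → ENNReal) (hf : ∀ i, Measurable (f i)) :
    ∫⁻ x, ∏ i, f i (x i) ∂Measure.pi μ = ∏ i, ∫⁻ y, f i y ∂μ i := by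
  have e : Fin (Fintype.card ι) ≃ ι := (Fintype.equivFin ι).symm
  have h := measurePreserving_piCongrLeft (fun i => μ i) e
  rw [← h.lintegral_comp (f := fun x => ∏ i, f i (x i)) (Finset.measurable_prod _ fun i _ => (hf i).comp (measurable_pi_apply i))]

  have key : ∀ x : Fin (Fintype.card ι) → ℝ,
      ∏ i, f i ((MeasurableEquiv.piCongrLeft (fun _ => ℝ) e) x i)
        = ∏ i', f (e i') (x i') := by
    intro x
    refine (Fintype.prod_equiv e _ _ fun i' => ?_).symm
    congr 1
    exact (Equiv.piCongrLeft_apply_apply (fun _ => ℝ) e x i').symm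
  simp_rw [key]
  rw [my_lintegral_pi_fin (fun i' => μ (e i')) (fun i' => f (e i')) (fun i' => hf (e i'))]
  exact Fintype.prod_equiv e _ _ fun i' => rfl

theorem my_pi_withDensity {ι : Type*} [Fintype ι] (μ : ι → Measure ℝ) [∀ i, SigmaFinite (μ i)]
    (f : ι → ℝ → ENNReal) (hf : ∀ i, Measurable (f i))
    [∀ i, SigmaFinite ((μ i).withDensity (f i))] :
    Measure.pi (fun i => (μ i).withDensity (f i)) =
      (Measure.pi μ).withDensity (fun x => ∏ i, f i (x i)) := by
  refine (Measure.pi_eq (μ := fun i => (μ i).withDensity (f i)) fun s hs => ?_)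
  rw [withDensity_apply _ (MeasurableSet.univ_pi hs),
    ← lintegral_indicator (MeasurableSet.univ_pi hs)]
  have key : ∀ x : ι → ℝ, (Set.univ.pi s).indicator (fun x => ∏ i, f i (x i)) x
      = ∏ i, (s i).indicator (f i) (x i) := by
    intro x
    by_cases hx : x ∈ Set.univ.pi s
    · rw [Set.indicator_of_mem hx]
      exact Finset.prod_congr rfl fun i _ =>
        (Set.indicator_of_mem (hx i (Set.mem_univ i)) _).symm
    · rw [Set.indicator_of_notMem hx]
      have : ∃ i, x i ∉ s i := by
        by_contra hc
        push_neg at hc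
        exact hx fun i _ => hc i
      obtain ⟨i, hi⟩ := this
      exact (Finset.prod_eq_zero (Finset.mem_univ i)
        (Set.indicator_of_notMem hi _)).symm
  simp_rw [key]
  rw [my_lintegral_pi μ _ (fun i => (hf i).indicator (hs i))]
  exact Finset.prod_congr rfl fun i _ => ((withDensity_apply _ (hs i)).trans
    (lintegral_indicator (hs i) _).symm).symm

theorem pi_laplace_eq {ι : Type*} [Fintype ι] (b : ℝ) :
    Measure.pi (fun _ : ι => laplace b) =
      (volume : Measure (ι → ℝ)).withDensity (fun x => ∏ i, ENNReal.ofReal (lapDens b (x i))) := by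
  rw [volume_pi]
  exact my_pi_withDensity (fun _ => volume) (fun _ x => ENNReal.ofReal (lapDens b x))
    (fun _ => (measurable_lapDens b).ennreal_ofReal)

theorem measurable_piDens {ι : Type*} [Fintype ι] (b : ℝ) (q : ι → ℝ) :
    Measurable fun x : ι → ℝ => ∏ i, ENNReal.ofReal (lapDens b ((-q + x) i)) :=
  Finset.measurable_prod _ fun i _ => (((measurable_lapDens b).comp
    ((measurable_const_add (-q i)).comp (measurable_pi_apply i))).ennreal_ofReal)

theorem map_add_laplace_le {ι : Type*} [Fintype ι] {b : ℝ} (hb : 0 < b) (q q' : ι → ℝ) :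
    (Measure.pi fun _ : ι => laplace b).map (fun y => q + y) ≤
      ENNReal.ofReal (Real.exp ((∑ i, |q i - q' i|) / b)) •
        (Measure.pi fun _ : ι => laplace b).map (fun y => q' + y) := by
  have hmeas : Measurable fun x : ι → ℝ => ∏ i, ENNReal.ofReal (lapDens b (x i)) :=
    Finset.measurable_prod _ fun i _ =>
      ((measurable_lapDens b).comp (measurable_pi_apply i)).ennreal_ofReal
  rw [pi_laplace_eq b,
    my_withDensity_map_add volume (fun x : ι → ℝ => ∏ i, ENNReal.ofReal (lapDens b (x i))) hmeas q,
    my_withDensity_map_add volume (fun x : ι → ℝ => ∏ i, ENNReal.ofReal (lapDens b (x i))) hmeas q',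
    ← withDensity_smul _ (measurable_piDens b q')]
  refine withDensity_mono (Filter.Eventually.of_forall fun x => ?_)
  simp only [Pi.smul_apply, Pi.add_apply, Pi.neg_apply, smul_eq_mul]
  rw [← ENNReal.ofReal_prod_of_nonneg (fun i _ => lapDens_nonneg hb _),
    ← ENNReal.ofReal_prod_of_nonneg (fun i _ => lapDens_nonneg hb _),
    ← ENNReal.ofReal_mul (Real.exp_nonneg _)]
  refine ENNReal.ofReal_le_ofReal ?_
  calc ∏ i, lapDens b (-q i + x i)
      ≤ ∏ i, Real.exp (|q i - q' i| / b) * lapDens b (-q' i + x i) := by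
        refine Finset.prod_le_prod (fun i _ => lapDens_nonneg hb _) (fun i _ => ?_)
        have h := lapDens_le hb (-q i + x i) (-q' i + x i)
        have he : |(-q i + x i) - (-q' i + x i)| = |q i - q' i| := by
          rw [show (-q i + x i) - (-q' i + x i) = -(q i - q' i) by ring, abs_neg]
        rwa [he] at h
    _ = Real.exp ((∑ i, |q i - q' i|) / b) * ∏ i, lapDens b (-q' i + x i) := by
        rw [Finset.prod_mul_distrib, ← Real.exp_sum, Finset.sum_div]

lemma iterQuery_eq_sum {d K : ℕ} (g : (Fin d → ℝ) → Fin K) (D : Finset (Fin d → ℝ))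
    (p : Fin K × Fin (d + 1)) :
    iterQuery g D p = ∑ x ∈ D, if g x = p.1 then
      (if h : (p.2 : ℕ) < d then x ⟨p.2, h⟩ else 1) else 0 := by
  unfold iterQuery
  by_cases h : (p.2 : ℕ) < d
  · simp only [h, dif_pos]
    rw [Finset.sum_filter]
  · simp only [h, dif_neg, not_false_iff]
    rw [Finset.card_filter]
    push_cast
    rfl

lemma iterQuery_insert_sub {d K : ℕ} (g : (Fin d → ℝ) → Fin K) (D : Finset (Fin d → ℝ))
    {x : Fin d → ℝ} (hx : x ∉ D) (p : Fin K × Fin (d + 1)) :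
    iterQuery g (insert x D) p - iterQuery g D p =
      if g x = p.1 then (if h : (p.2 : ℕ) < d then x ⟨p.2, h⟩ else 1) else 0 := by
  rw [iterQuery_eq_sum, iterQuery_eq_sum, Finset.sum_insert hx]
  ring

lemma sensitivity {d K : ℕ} (g : (Fin d → ℝ) → Fin K) (D : Finset (Fin d → ℝ))
    {x : Fin d → ℝ} (hx : x ∉ D) {r : ℝ} (hxr : ∀ i, |x i| ≤ r) :
    ∑ p : Fin K × Fin (d + 1), |iterQuery g (insert x D) p - iterQuery g D p|
      ≤ d * r + 1 := by
  have key : ∀ p : Fin K × Fin (d + 1),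
      |iterQuery g (insert x D) p - iterQuery g D p| =
        if g x = p.1 then (if h : (p.2 : ℕ) < d then |x ⟨p.2, h⟩| else 1) else 0 := by
    intro p
    rw [iterQuery_insert_sub g D hx]
    by_cases hgx : g x = p.1
    · simp only [hgx, if_true]
      by_cases h : (p.2 : ℕ) < d
      · simp [h]
      · simp [h]
    · simp [hgx]
  simp_rw [key]
  rw [Fintype.sum_prod_type]
  have inner : ∀ j : Fin K, (∑ i : Fin (d + 1),
      if g x = j then (if h : (i : ℕ) < d then |x ⟨i, h⟩| else 1) else 0) =
      if g x = j then (∑ i : Fin (d + 1), if h : (i : ℕ) < d then |x ⟨i, h⟩| else 1) else 0 := by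
    intro j
    split_ifs with hj <;> simp
  simp_rw [inner]
  rw [Finset.sum_ite_eq (Finset.univ : Finset (Fin K)) (g x)
    (fun _ => ∑ i : Fin (d + 1), if h : (i : ℕ) < d then |x ⟨i, h⟩| else 1)]
  simp only [Finset.mem_univ, if_true]
  rw [Fin.sum_univ_castSucc]
  have hlast : (if h : ((Fin.last d : Fin (d+1)) : ℕ) < d then |x ⟨(Fin.last d), h⟩| else 1) = 1 := by
    simp [Fin.last]
  have hcast : ∀ i : Fin d,
      (if h : ((Fin.castSucc i : Fin (d+1)) : ℕ) < d then |x ⟨(Fin.castSucc i : Fin (d+1)), h⟩| else 1) = |x i| := by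
    intro i
    have h : ((Fin.castSucc i : Fin (d+1)) : ℕ) < d := i.isLt
    rw [dif_pos h]
    congr 1
  rw [hlast]
  simp_rw [hcast]
  have : ∑ i : Fin d, |x i| ≤ d * r := by
    calc ∑ i : Fin d, |x i| ≤ ∑ _i : Fin d, r := Finset.sum_le_sum fun i _ => hxr i
      _ = d * r := by simp [Finset.sum_const, nsmul_eq_mul]
  linarith

lemma measurable_iterQuery_param {d K T' : ℕ}
    (gT : (Fin T' → (Fin K × Fin (d + 1) → ℝ)) → (Fin d → ℝ) → Fin K)
    (hgT : Measurable gT) (D : Finset (Fin d → ℝ)) :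
    Measurable fun h => iterQuery (gT h) D := by
  rw [measurable_pi_iff]
  intro p
  simp_rw [iterQuery_eq_sum]
  refine Finset.measurable_sum _ fun x _ => ?_
  have hm : Measurable fun h => gT h x := (measurable_pi_apply x).comp hgT
  exact Measurable.ite (hm (MeasurableSet.singleton p.1)) measurable_const measurable_const

lemma measurable_snoc_pair {d K T' : ℕ} :
    Measurable fun z : (Fin T' → (Fin K × Fin (d + 1) → ℝ)) × (Fin K × Fin (d + 1) → ℝ) =>
      (Fin.snoc z.1 z.2 : Fin (T' + 1) → (Fin K × Fin (d + 1) → ℝ)) := by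
  rw [measurable_pi_iff]
  intro j
  refine Fin.lastCases ?_ ?_ j
  · simpa [Fin.snoc_last] using measurable_snd
  · intro i
    simpa [Fin.snoc_castSucc, Function.comp_def] using (measurable_pi_apply i).comp measurable_fst

lemma measurable_kernel {d K T' : ℕ}
    (gT : (Fin T' → (Fin K × Fin (d + 1) → ℝ)) → (Fin d → ℝ) → Fin K)
    (hgT : Measurable gT) (b : ℝ) (D : Finset (Fin d → ℝ)) :
    Measurable fun h : Fin T' → (Fin K × Fin (d + 1) → ℝ) =>
      (noisyIteration (gT h) b D).map
        (Fin.snoc (α := fun _ : Fin (T' + 1) => (Fin K × Fin (d + 1) → ℝ)) h) := by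
  rw [Measure.measurable_measure]
  intro s hs
  have hΦ : Measurable fun z : (Fin T' → (Fin K × Fin (d + 1) → ℝ)) × (Fin K × Fin (d + 1) → ℝ) =>
      (Fin.snoc z.1 (iterQuery (gT z.1) D + z.2) : Fin (T' + 1) → (Fin K × Fin (d + 1) → ℝ)) := by
    exact measurable_snoc_pair.comp
      (measurable_fst.prodMk
        (((measurable_iterQuery_param gT hgT D).comp measurable_fst).add measurable_snd))
  have heval : ∀ h : Fin T' → (Fin K × Fin (d + 1) → ℝ),
      (noisyIteration (gT h) b D).map
        (Fin.snoc (α := fun _ : Fin (T' + 1) => (Fin K × Fin (d + 1) → ℝ)) h) s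
      = ∫⁻ y, s.indicator 1 (Fin.snoc h (iterQuery (gT h) D + y))
          ∂(Measure.pi fun _ : Fin K × Fin (d + 1) => laplace b) := by
    intro h
    have hsn : Measurable (Fin.snoc (α := fun _ : Fin (T' + 1) => (Fin K × Fin (d + 1) → ℝ)) h) :=
      measurable_snoc_pair.comp (measurable_const.prodMk measurable_id)
    have hshift : Measurable fun y : Fin K × Fin (d + 1) → ℝ => iterQuery (gT h) D + y :=
      measurable_const.add measurable_id
    rw [noisyIteration, Measure.map_map hsn hshift,
      Measure.map_apply (hsn.comp hshift) hs,
      ← lintegral_indicator_one (hsn.comp hshift hs)]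
    congr 1
  simp_rw [heval]
  exact Measurable.lintegral_prod_right' ((measurable_one.indicator hs).comp hΦ)

lemma noisyIteration_le {d K : ℕ} (g' : (Fin d → ℝ) → Fin K) {b ε : ℝ} (hb : 0 < b) (hε : 0 < ε)
    (D D' : Finset (Fin d → ℝ))
    (hsens : ∑ p : Fin K × Fin (d + 1), |iterQuery g' D p - iterQuery g' D' p| ≤ ε * b) :
    noisyIteration g' b D ≤ ENNReal.ofReal (Real.exp ε) • noisyIteration g' b D' := by
  rw [noisyIteration, noisyIteration]
  refine le_trans (map_add_laplace_le hb (iterQuery g' D) (iterQuery g' D')) ?_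
  have hc : ENNReal.ofReal (Real.exp ((∑ p : Fin K × Fin (d + 1),
      |iterQuery g' D p - iterQuery g' D' p|) / b)) ≤ ENNReal.ofReal (Real.exp ε) := by
    refine ENNReal.ofReal_le_ofReal (Real.exp_le_exp.mpr ?_)
    rw [div_le_iff₀ hb]
    exact hsens
  refine Measure.le_iff.mpr fun s hs => ?_
  rw [Measure.smul_apply, Measure.smul_apply, smul_eq_mul, smul_eq_mul]
  exact mul_le_mul_left hc _

lemma adaptive_le {d K : ℕ}
    (g : (t : ℕ) → (Fin t → (Fin K × Fin (d + 1) → ℝ)) → (Fin d → ℝ) → Fin K)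
    (hg : ∀ t, Measurable (g t)) (ε : ℕ → ℝ) (r : ℝ) (hr : 0 < r)
    (D D' : Finset (Fin d → ℝ))
    (hsens : ∀ g' : (Fin d → ℝ) → Fin K,
      ∑ p : Fin K × Fin (d + 1), |iterQuery g' D p - iterQuery g' D' p| ≤ d * r + 1) :
    ∀ T : ℕ, (∀ t < T, 0 < ε t) →
      ∀ S : Set (Fin T → (Fin K × Fin (d + 1) → ℝ)), MeasurableSet S →
        adaptiveMech d K g (fun t => (d * r + 1) / ε t) D T S ≤
          ENNReal.ofReal (Real.exp (∑ t ∈ Finset.range T, ε t)) *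
            adaptiveMech d K g (fun t => (d * r + 1) / ε t) D' T S := by
  intro T
  induction T with
  | zero =>
      intro _ S hS
      simp [adaptiveMech]
  | succ T ih =>
      intro hε S hS
      have hεT : 0 < ε T := hε T (Nat.lt_succ_self T)
      have hΔ : (0 : ℝ) < (d : ℝ) * r + 1 := by positivity
      have hb : 0 < ((d : ℝ) * r + 1) / ε T := div_pos hΔ hεT
      simp only [adaptiveMech]
      rw [Measure.bind_apply hS (measurable_kernel (g T) (hg T) _ D).aemeasurable,
        Measure.bind_apply hS (measurable_kernel (g T) (hg T) _ D').aemeasurable]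
      set c1 := ENNReal.ofReal (Real.exp (ε T)) with hc1
      set c2 := ENNReal.ofReal (Real.exp (∑ t ∈ Finset.range T, ε t)) with hc2
      have hsn : ∀ h : Fin T → (Fin K × Fin (d + 1) → ℝ),
          Measurable (Fin.snoc (α := fun _ : Fin (T + 1) => (Fin K × Fin (d + 1) → ℝ)) h) :=
        fun h => measurable_snoc_pair.comp (measurable_const.prodMk measurable_id)
      have hpt : ∀ h : Fin T → (Fin K × Fin (d + 1) → ℝ),
          ((noisyIteration (g T h) (((d : ℝ) * r + 1) / ε T) D).map (Fin.snoc h)) S ≤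
            c1 * ((noisyIteration (g T h) (((d : ℝ) * r + 1) / ε T) D').map (Fin.snoc h)) S := by
        intro h
        have hle := noisyIteration_le (g T h) hb hεT D D' (by
          rw [mul_div_cancel₀ _ hεT.ne']
          exact hsens (g T h))
        have hmap := Measure.map_mono hle (hsn h)
        rw [Measure.map_smul] at hmap
        have := Measure.le_iff'.mp hmap S
        rwa [Measure.smul_apply, smul_eq_mul] at this
      calc ∫⁻ h, ((noisyIteration (g T h) (((d : ℝ) * r + 1) / ε T) D).map (Fin.snoc h)) S
            ∂adaptiveMech d K g (fun t => ((d : ℝ) * r + 1) / ε t) D T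
          ≤ ∫⁻ h, c1 * ((noisyIteration (g T h) (((d : ℝ) * r + 1) / ε T) D').map (Fin.snoc h)) S
            ∂adaptiveMech d K g (fun t => ((d : ℝ) * r + 1) / ε t) D T := lintegral_mono hpt
        _ = c1 * ∫⁻ h, ((noisyIteration (g T h) (((d : ℝ) * r + 1) / ε T) D').map (Fin.snoc h)) S
            ∂adaptiveMech d K g (fun t => ((d : ℝ) * r + 1) / ε t) D T := by
            exact lintegral_const_mul c1 (f := fun h =>
              (Measure.map (Fin.snoc h) (noisyIteration (g T h) (((d : ℝ) * r + 1) / ε T) D')) S)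
              ((Measure.measurable_coe hS).comp (measurable_kernel (g T) (hg T) _ D'))
        _ ≤ c1 * ∫⁻ h, ((noisyIteration (g T h) (((d : ℝ) * r + 1) / ε T) D').map (Fin.snoc h)) S
            ∂(c2 • adaptiveMech d K g (fun t => ((d : ℝ) * r + 1) / ε t) D' T) := by
            refine mul_le_mul_right (lintegral_mono' ?_ le_rfl) c1
            refine Measure.le_iff.mpr fun s hs => ?_
            rw [Measure.smul_apply, smul_eq_mul]
            exact ih (fun t ht => hε t (ht.trans (Nat.lt_succ_self T))) s hs
        _ = (c1 * c2) * ∫⁻ h, ((noisyIteration (g T h) (((d : ℝ) * r + 1) / ε T) D').map (Fin.snoc h)) S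
            ∂adaptiveMech d K g (fun t => ((d : ℝ) * r + 1) / ε t) D' T := by
            rw [lintegral_smul_measure]; ring
        _ = ENNReal.ofReal (Real.exp (∑ t ∈ Finset.range (T + 1), ε t)) *
            ∫⁻ h, ((noisyIteration (g T h) (((d : ℝ) * r + 1) / ε T) D').map (Fin.snoc h)) S
            ∂adaptiveMech d K g (fun t => ((d : ℝ) * r + 1) / ε t) D' T := by
            rw [hc1, hc2, ← ENNReal.ofReal_mul (Real.exp_nonneg _), ← Real.exp_add,
              Finset.sum_range_succ, add_comm]

/-- Theorem 1, differential privacy of DP-KCCM: let `ε₁, …, ε_T > 0`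
with `ε = ε₁ + ⋯ + ε_T`, `r > 0` and `Δ = d·r + 1`. The adaptive mechanism that runs
`T` DP-KCCM iterations — iteration `t` using an assignment function `g t` chosen
measurably from the previous outputs only, and adding i.i.d. `Lap(Δ/ε_t)` noise to
each per-cluster sum coordinate and count — followed by a deterministic measurable
post-processing map (the cluster-merging step, which uses only the noisy centroids
and noisy counts), satisfies `ε`-differential privacy on datasets of points in
`[−r, r]^d`. -/
theorem dpkccm_isDP {d K : ℕ} (T : ℕ) (ε : ℕ → ℝ) (hε : ∀ t < T, 0 < ε t)
    (r : ℝ) (hr : 0 < r)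
    (g : (t : ℕ) → (Fin t → (Fin K × Fin (d + 1) → ℝ)) → (Fin d → ℝ) → Fin K)
    (hg : ∀ t, Measurable (g t))
    {Out : Type*} [MeasurableSpace Out]
    (post : (Fin T → (Fin K × Fin (d + 1) → ℝ)) → Out)
    (hpost : Measurable post) :
    ∀ D D' : Finset (Fin d → ℝ), Neighbor D D' →
      (∀ x ∈ D, ∀ i, |x i| ≤ r) → (∀ x ∈ D', ∀ i, |x i| ≤ r) →
      ∀ S : Set Out, MeasurableSet S →
        (adaptiveMech d K g (fun t => (d * r + 1) / ε t) D T).map post S ≤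
          ENNReal.ofReal (Real.exp (∑ t ∈ Finset.range T, ε t)) *
            (adaptiveMech d K g (fun t => (d * r + 1) / ε t) D' T).map post S := by
  intro D D' hN hD hD' S hS
  have hsens : ∀ g' : (Fin d → ℝ) → Fin K,
      ∑ p : Fin K × Fin (d + 1), |iterQuery g' D p - iterQuery g' D' p| ≤ (d : ℝ) * r + 1 := by
    intro g'
    rcases hN with ⟨x, hx, rfl⟩ | ⟨x, hx, rfl⟩
    · have h := sensitivity g' D hx (fun i => hD' x (Finset.mem_insert_self x D) i)
      calc ∑ p : Fin K × Fin (d + 1), |iterQuery g' D p - iterQuery g' (insert x D) p|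
          = ∑ p : Fin K × Fin (d + 1), |iterQuery g' (insert x D) p - iterQuery g' D p| := by
            exact Finset.sum_congr rfl fun p _ => abs_sub_comm _ _
        _ ≤ (d : ℝ) * r + 1 := h
    · exact sensitivity g' D' hx (fun i => hD x (Finset.mem_insert_self x D') i)
  rw [Measure.map_apply hpost hS, Measure.map_apply hpost hS]
  exact adaptive_le g hg ε r hr D D' hsens T hε _ (hpost hS)
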